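/- Let (ℓᵢ)ᵢ₌₁^d be real numbers on a partition 0 = x₁ < ⋯ < x_d = 1 satisfying: (a) the discrete exponential concavity constraint (e^{ℓ₂}-e^{ℓ₁})/(x₂-x₁) ≥ ⋯ ≥ (e^{ℓ_d}-e^{ℓ_{d-1}})/(x_d-x_{d-1}); (b) the endpoint slope constraints ((ℓ₂-ℓ₁)/(x₂-x₁))² ≤ β and ((ℓ_d-ℓ_{d-1})/(x_d-x_{d-1}))² ≤ β; and (c) ℓ_k = 0 for some index k with x_k = 1/2. Then |ℓ_{i+1} - ℓᵢ| ≤ √β·(x_{i+1} - xᵢ) for all i, and -√β/2 ≤ ℓᵢ ≤ log 2 for all i. -/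

import Mathlib

open Set

private noncomputable def sl (x L : ℕ → ℝ) (i : ℕ) : ℝ :=
  (Real.exp (L (i+1)) - Real.exp (L i)) / (x (i+1) - x i)

private lemma exp_diff_ge (a b : ℝ) : Real.exp a * (b - a) ≤ Real.exp b - Real.exp a := by
  have h := Real.add_one_le_exp (b - a)
  have h2 := mul_le_mul_of_nonneg_left h (Real.exp_pos a).le
  rw [← Real.exp_add] at h2
  have e : a + (b - a) = b := by ring
  rw [e] at h2
  nlinarith

private lemma exp_diff_le (a b : ℝ) : Real.exp b - Real.exp a ≤ Real.exp b * (b - a) := by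
  have := exp_diff_ge b a
  nlinarith

private lemma sl_one (x L : ℕ → ℝ) (i : ℕ) (h : x (i+1) - x i ≠ 0) :
    Real.exp (L (i+1)) - Real.exp (L i) = sl x L i * (x (i+1) - x i) := by
  rw [sl]; field_simp

private lemma sl_anti (x L : ℕ → ℝ) (N : ℕ)
    (ha : ∀ i, i + 2 ≤ N → sl x L (i+1) ≤ sl x L i) :
    ∀ a b, a ≤ b → b + 1 ≤ N → sl x L b ≤ sl x L a := by
  have key : ∀ n a, a + n + 1 ≤ N → sl x L (a + n) ≤ sl x L a := by
    intro n
    induction n with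
    | zero => intro a _; simp
    | succ m ih =>
      intro a h
      have h1 : sl x L (a + m + 1) ≤ sl x L (a + m) := ha (a + m) (by omega)
      have h2 := ih a (by omega)
      calc sl x L (a + (m+1)) = sl x L (a + m + 1) := by rw [Nat.add_succ]
      _ ≤ sl x L a := le_trans h1 h2
  intro a b hab hb
  have := key (b - a) a (by omega)
  rwa [Nat.add_sub_cancel' hab] at this

private lemma lemA (x L : ℕ → ℝ) (N : ℕ)
    (hΔ : ∀ i, i + 1 ≤ N → 0 < x (i+1) - x i)
    (hanti : ∀ a b, a ≤ b → b + 1 ≤ N → sl x L b ≤ sl x L a) :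
    ∀ a b, a ≤ b → b ≤ N →
      Real.exp (L b) - Real.exp (L a) ≤ sl x L a * (x b - x a) := by
  have key : ∀ n a, a + n ≤ N →
      Real.exp (L (a+n)) - Real.exp (L a) ≤ sl x L a * (x (a+n) - x a) := by
    intro n
    induction n with
    | zero => intro a _; simp
    | succ m ih =>
      intro a h
      have hd1 : 0 < x (a+m+1) - x (a+m) := hΔ (a+m) (by omega)
      have hs := sl_one x L (a+m) (ne_of_gt hd1)
      have h2 := ih a (by omega)
      have h3 : sl x L (a+m) ≤ sl x L a := hanti a (a+m) (by omega) (by omega)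
      have h4 := mul_le_mul_of_nonneg_right h3 hd1.le
      show Real.exp (L (a+m+1)) - Real.exp (L a) ≤ sl x L a * (x (a+m+1) - x a)
      nlinarith
  intro a b hab hb
  have := key (b - a) a (by omega)
  rwa [Nat.add_sub_cancel' hab] at this

private lemma lemB (x L : ℕ → ℝ) (N : ℕ)
    (hΔ : ∀ i, i + 1 ≤ N → 0 < x (i+1) - x i)
    (hanti : ∀ a b, a ≤ b → b + 1 ≤ N → sl x L b ≤ sl x L a) :
    ∀ a b, a < b → b ≤ N →
      sl x L (b-1) * (x b - x a) ≤ Real.exp (L b) - Real.exp (L a) := by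
  have key : ∀ n a, a + n + 1 ≤ N →
      sl x L (a+n) * (x (a+n+1) - x a) ≤ Real.exp (L (a+n+1)) - Real.exp (L a) := by
    intro n
    induction n with
    | zero =>
      intro a h
      have hd1 : 0 < x (a+1) - x a := hΔ a h
      have hs := sl_one x L a (ne_of_gt hd1)
      simp only [Nat.add_zero]
      linarith
    | succ m ih =>
      intro a h
      have hd1 : 0 < x (a+1) - x a := hΔ a (by omega)
      have hs := sl_one x L a (ne_of_gt hd1)
      have h2 := ih (a+1) (by omega)
      have e1 : a + 1 + m = a + m + 1 := by omega
      rw [e1] at h2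
      have e2 : a + m + 1 + 1 = a + m + 2 := by omega
      rw [e2] at h2
      have h3 : sl x L (a+m+1) ≤ sl x L a := hanti a (a+m+1) (by omega) (by omega)
      have h4 := mul_le_mul_of_nonneg_right h3 hd1.le
      show sl x L (a+m+1) * (x (a+m+2) - x a) ≤ Real.exp (L (a+m+2)) - Real.exp (L a)
      nlinarith
  intro a b hab hb
  obtain ⟨n, rfl⟩ : ∃ n, b = a + n + 1 := ⟨b - a - 1, by omega⟩
  have := key n a (by omega)
  simpa using this

private lemma part1 (β : ℝ) (hβ : 0 < β) (N : ℕ) (hN : 1 ≤ N) (x L : ℕ → ℝ)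
    (hΔ : ∀ i, i + 1 ≤ N → 0 < x (i+1) - x i)
    (hxmono : ∀ a b, a ≤ b → b ≤ N → x a ≤ x b)
    (hanti : ∀ a b, a ≤ b → b + 1 ≤ N → sl x L b ≤ sl x L a)
    (hb1 : |L 1 - L 0| ≤ Real.sqrt β * (x 1 - x 0))
    (hb2 : |L N - L (N-1)| ≤ Real.sqrt β * (x N - x (N-1))) :
    ∀ i, i + 1 ≤ N → |L (i+1) - L i| ≤ Real.sqrt β * (x (i+1) - x i) := by
  intro i hi
  have hsq : 0 < Real.sqrt β := Real.sqrt_pos.mpr hβ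
  have hΔi : 0 < x (i+1) - x i := hΔ i hi
  rw [abs_le]
  constructor
  · -- lower bound
    by_contra hcon
    push_neg at hcon
    rcases eq_or_lt_of_le hi with hiN | hiN
    · have e : N - 1 = i := by omega
      rw [← hiN, Nat.add_sub_cancel] at hb2
      linarith [neg_abs_le (L (i+1) - L i)]
    · have hjN : (N - 1) + 1 = N := by omega
      set j := N - 1 with hj
      have hΔj : 0 < x (j+1) - x j := hΔ j (by omega)
      rw [← hjN] at hb2
      have hle := exp_diff_le (L i) (L (i+1))
      have hsli : sl x L i < -(Real.exp (L (i+1)) * Real.sqrt β) := by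
        rw [sl, div_lt_iff₀ hΔi]
        nlinarith [Real.exp_pos (L (i+1))]
      have hgeN := exp_diff_ge (L j) (L (j+1))
      have hslj : -(Real.exp (L j) * Real.sqrt β) ≤ sl x L j := by
        rw [sl, le_div_iff₀ hΔj]
        nlinarith [Real.exp_pos (L j), neg_abs_le (L (j+1) - L j)]
      have hsli1 : sl x L (i+1) ≤ sl x L i := hanti i (i+1) (by omega) (by omega)
      have hA := lemA x L N hΔ hanti (i+1) j (by omega) (by omega)
      have hxij : x (i+1) ≤ x j := hxmono (i+1) j (by omega) (by omega)
      have hFji : Real.exp (L j) ≤ Real.exp (L (i+1)) := by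
        nlinarith [mul_pos (Real.exp_pos (L (i+1))) hsq]
      have hmono2 : sl x L j ≤ sl x L i := hanti i j (by omega) (by omega)
      have hfin : Real.exp (L j) * Real.sqrt β ≤ Real.exp (L (i+1)) * Real.sqrt β :=
        mul_le_mul_of_nonneg_right hFji hsq.le
      linarith
  · -- upper bound
    by_contra hcon
    push_neg at hcon
    have hge := exp_diff_ge (L i) (L (i+1))
    rcases Nat.eq_zero_or_pos i with h0 | hpos
    · subst h0
      simp only [Nat.zero_add] at hcon hΔi
      linarith [le_abs_self (L 1 - L 0)]
    · have hsli : Real.exp (L i) * Real.sqrt β < sl x L i := by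
        rw [sl, lt_div_iff₀ hΔi]
        nlinarith [Real.exp_pos (L i)]
      have hΔ0 : 0 < x 1 - x 0 := hΔ 0 (by omega)
      have hs0 : sl x L 0 ≤ Real.exp (L 1) * Real.sqrt β := by
        rw [sl]
        simp only [Nat.zero_add]
        rw [div_le_iff₀ hΔ0]
        have h1 := exp_diff_le (L 0) (L 1)
        nlinarith [Real.exp_pos (L 1), le_abs_self (L 1 - L 0)]
      have hanti0 : sl x L i ≤ sl x L 0 := hanti 0 i (by omega) hi
      have hF1i : Real.exp (L 1) ≤ Real.exp (L i) := by
        rcases eq_or_lt_of_le (show 1 ≤ i from hpos) with h1 | h1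
        · rw [← h1]
        · have hB := lemB x L N hΔ hanti 1 i h1 (by omega)
          have hanti1 : sl x L i ≤ sl x L (i-1) := hanti (i-1) i (by omega) hi
          have hx1i : x 1 ≤ x i := hxmono 1 i (by omega) (by omega)
          have hslipos : 0 < sl x L i := lt_trans (by positivity) hsli
          nlinarith
      nlinarith [mul_le_mul_of_nonneg_right hF1i hsq.le]

set_option maxHeartbeats 1000000 in
theorem discrete_constraint_bounds
    (β : ℝ) (hβ : 0 < β)
    (d : ℕ) (hd : 2 ≤ d)
    (x L : ℕ → ℝ)
    (hx0 : x 0 = 0) (hxd : x (d-1) = 1)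
    (hmono : ∀ i j, i < j → j ≤ d - 1 → x i < x j)
    (ha : ∀ i, i + 2 ≤ d - 1 →
      (Real.exp (L (i+2)) - Real.exp (L (i+1))) / (x (i+2) - x (i+1)) ≤
      (Real.exp (L (i+1)) - Real.exp (L i)) / (x (i+1) - x i))
    (hb1 : ((L 1 - L 0) / (x 1 - x 0))^2 ≤ β)
    (hb2 : ((L (d-1) - L (d-2)) / (x (d-1) - x (d-2)))^2 ≤ β)
    (hc : ∃ k ≤ d - 1, x k = 1/2 ∧ L k = 0) :
    (∀ i, i + 1 ≤ d - 1 → |L (i+1) - L i| ≤ Real.sqrt β * (x (i+1) - x i)) ∧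
    (∀ i ≤ d - 1, -Real.sqrt β / 2 ≤ L i ∧ L i ≤ Real.log 2) := by
  obtain ⟨k, hkN, hxk, hLk⟩ := hc
  have hN : 1 ≤ d - 1 := by omega
  have hΔ : ∀ i, i + 1 ≤ d - 1 → 0 < x (i+1) - x i :=
    fun i h => sub_pos.mpr (hmono i (i+1) (Nat.lt_succ_self i) h)
  have hxmono : ∀ a b, a ≤ b → b ≤ d - 1 → x a ≤ x b := by
    intro a b hab hb
    rcases eq_or_lt_of_le hab with rfl | h
    · exact le_refl _
    · exact (hmono a b h hb).le
  have hanti : ∀ a b, a ≤ b → b + 1 ≤ d - 1 → sl x L b ≤ sl x L a :=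
    sl_anti x L (d-1) (fun i h => ha i h)
  have hsq : 0 < Real.sqrt β := Real.sqrt_pos.mpr hβ
  have hΔ0 : 0 < x 1 - x 0 := hΔ 0 hN
  have hb1' : |L 1 - L 0| ≤ Real.sqrt β * (x 1 - x 0) := by
    have h := Real.sqrt_le_sqrt hb1
    rwa [Real.sqrt_sq_eq_abs, abs_div, abs_of_pos hΔ0, div_le_iff₀ hΔ0] at h
  have e21 : d - 2 + 1 = d - 1 := by omega
  have hΔd : 0 < x (d-1) - x (d-2) := by
    have := hΔ (d-2) (by omega); rwa [e21] at this
  have hb2' : |L (d-1) - L (d-2)| ≤ Real.sqrt β * (x (d-1) - x (d-2)) := by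
    have h := Real.sqrt_le_sqrt hb2
    rwa [Real.sqrt_sq_eq_abs, abs_div, abs_of_pos hΔd, div_le_iff₀ hΔd] at h
  have e12 : d - 1 - 1 = d - 2 := by omega
  have hpart1 : ∀ i, i + 1 ≤ d - 1 → |L (i+1) - L i| ≤ Real.sqrt β * (x (i+1) - x i) := by
    apply part1 β hβ (d-1) hN x L hΔ hxmono hanti hb1'
    rw [e12]; exact hb2'
  refine ⟨hpart1, ?_⟩
  have hk0 : k ≠ 0 := by rintro rfl; rw [hx0] at hxk; norm_num at hxk
  have hkd : k ≠ d - 1 := by rintro rfl; rw [hxd] at hxk; norm_num at hxk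
  have hk1 : 1 ≤ k := by omega
  have hkN' : k + 1 ≤ d - 1 := by omega
  have hx0le : ∀ i, i ≤ d - 1 → 0 ≤ x i := by
    intro i hi; rcases Nat.eq_zero_or_pos i with rfl | h
    · rw [hx0]
    · rw [← hx0]; exact (hmono 0 i h hi).le
  have hxle1 : ∀ i, i ≤ d - 1 → x i ≤ 1 := by
    intro i hi; rcases eq_or_lt_of_le hi with rfl | h
    · rw [hxd]
    · rw [← hxd]; exact (hmono i (d-1) h le_rfl).le
  have tele : ∀ n a, a + n ≤ d - 1 → |L (a+n) - L a| ≤ Real.sqrt β * (x (a+n) - x a) := by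
    intro n
    induction n with
    | zero => intro a _; simp
    | succ m ih =>
      intro a h
      have h1 := hpart1 (a+m) (by omega)
      have h2 := ih a (by omega)
      show |L (a+m+1) - L a| ≤ Real.sqrt β * (x (a+m+1) - x a)
      calc |L (a+m+1) - L a| ≤ |L (a+m+1) - L (a+m)| + |L (a+m) - L a| := abs_sub_le _ _ _
      _ ≤ Real.sqrt β * (x (a+m+1) - x (a+m)) + Real.sqrt β * (x (a+m) - x a) := add_le_add h1 h2
      _ = Real.sqrt β * (x (a+m+1) - x a) := by ring
  have hBk := lemB x L (d-1) hΔ hanti 0 k (by omega) hkN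
  rw [hx0, hxk, hLk, Real.exp_zero] at hBk
  have hAk := lemA x L (d-1) hΔ hanti k (d-1) hkN le_rfl
  rw [hxd, hxk, hLk, Real.exp_zero] at hAk
  have hordk : sl x L k ≤ sl x L (k-1) := hanti (k-1) k (by omega) hkN'
  have hskl : -2 < sl x L k := by
    have := Real.exp_pos (L (d-1)); linarith
  have hsku : sl x L (k-1) < 2 := by
    have := Real.exp_pos (L 0); linarith
  intro i hi
  constructor
  · rcases le_total i k with h | h
    · have ht := tele (k - i) i (by omega)
      rw [Nat.add_sub_cancel' h, hLk, hxk, zero_sub, abs_neg] at ht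
      have hxi0 := hx0le i hi
      have h2 : Real.sqrt β * (1/2 - x i) ≤ Real.sqrt β * (1/2) :=
        mul_le_mul_of_nonneg_left (by linarith) hsq.le
      linarith [neg_abs_le (L i)]
    · have ht := tele (i - k) k (by omega)
      rw [Nat.add_sub_cancel' h, hLk, hxk, sub_zero] at ht
      have hxi1 := hxle1 i hi
      have h2 : Real.sqrt β * (x i - 1/2) ≤ Real.sqrt β * (1/2) :=
        mul_le_mul_of_nonneg_left (by linarith) hsq.le
      linarith [neg_abs_le (L i)]
  · have key : Real.exp (L i) ≤ 2 := by
      rcases lt_trichotomy i k with h | h | h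
      · have hB := lemB x L (d-1) hΔ hanti i k h hkN
        rw [hxk, hLk, Real.exp_zero] at hB
        have hxik : x i ≤ 1/2 := by rw [← hxk]; exact (hmono i k h hkN).le
        have hxi0 := hx0le i hi
        have hq : (0:ℝ) ≤ sl x L (k-1) * (1/2 - x i) + 2 * (1/2 - x i) := by
          have hq0 : (0:ℝ) ≤ (sl x L (k-1) + 2) * (1/2 - x i) :=
            mul_nonneg (by linarith) (by linarith)
          linarith [hq0, (by ring : (sl x L (k-1) + 2) * (1/2 - x i) =
            sl x L (k-1) * (1/2 - x i) + 2 * (1/2 - x i))]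
        linarith
      · rw [h, hLk]; norm_num [Real.exp_zero]
      · have hA := lemA x L (d-1) hΔ hanti k i h.le hi
        rw [hxk, hLk, Real.exp_zero] at hA
        have hxik : 1/2 ≤ x i := by rw [← hxk]; exact (hmono k i h hi).le
        have hxi1 := hxle1 i hi
        have hq : sl x L k * (x i - 1/2) ≤ 2 * (x i - 1/2) := by
          have hq0 : (0:ℝ) ≤ (2 - sl x L k) * (x i - 1/2) :=
            mul_nonneg (by linarith) (by linarith)
          linarith [hq0, (by ring : (2 - sl x L k) * (x i - 1/2) =
            2 * (x i - 1/2) - sl x L k * (x i - 1/2))]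
        linarith
    have h2 : Real.exp (L i) ≤ Real.exp (Real.log 2) := by
      rw [Real.exp_log (by norm_num : (0:ℝ) < 2)]; exact key
    exact Real.exp_le_exp.mp h2
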